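/- For every fully connected ReLU network N with a single output neuron there exists a fully connected ReLU network N' with the same number of layers that computes the same function (N'(x) = N(x) for every input x ∈ ℝ^{n_0}), has at most twice as many neurons in each hidden layer as N, and in which every hidden neuron is classified: for every hidden layer i and every neuron index j, the suffix function S_i^{N'} is either monotone nondecreasing in its j-th coordinate (neuron (i,j) is inc) or monotone nonincreasing in its j-th coordinate (neuron (i,j) is dec). -/

import Mathlib

noncomputable section

/-- The ReLU activation function. -/
def relu (t : ℝ) : ℝ := max t 0

/-- A fully connected feedforward network with `L + 1` layers `0, 1, …, L`
(layer `0` is the input layer, layer `L` the output layer, layers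
`1, …, L - 1` the hidden layers).  `n i` is the size of layer `i` (its neurons
are the indices `< n i`); `W i q p` is the weight of the edge from neuron `p`
of layer `i - 1` to neuron `q` of layer `i` (for `1 ≤ i ≤ L`), and `b i q` is
the bias of neuron `q` of layer `i`. -/
structure Net where
  L : ℕ
  n : ℕ → ℕ
  W : ℕ → ℕ → ℕ → ℝ
  b : ℕ → ℕ → ℝ

namespace Net

/-- `act N x i q` : the value `v_{i,q}(x)` of neuron `q` of layer `i` on input
`x` (`v_0 = x`, and ReLU is applied at every layer `i ≥ 1`). -/
def act (N : Net) (x : ℕ → ℝ) : ℕ → ℕ → ℝ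
  | 0 => x
  | i + 1 => fun q =>
      relu ((∑ p ∈ Finset.range (N.n i), N.W (i + 1) q p * Net.act N x i p) + N.b (i + 1) q)

/-- The (single, index `0`) output of the network: the output layer is affine
(no ReLU): `N(x) = W_L v_{L-1}(x) + b_L`. -/
def out (N : Net) (x : ℕ → ℝ) : ℝ :=
  (∑ p ∈ Finset.range (N.n (N.L - 1)), N.W N.L 0 p * N.act x (N.L - 1) p) + N.b N.L 0

/-- Auxiliary suffix evaluation, with explicit fuel `d = L - 1 - i`. -/
def suffixAux (N : Net) : ℕ → ℕ → (ℕ → ℝ) → ℝ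
  | 0, i, u => (∑ p ∈ Finset.range (N.n i), N.W (i + 1) 0 p * u p) + N.b (i + 1) 0
  | d + 1, i, u =>
      Net.suffixAux N d (i + 1) fun q =>
        relu ((∑ p ∈ Finset.range (N.n i), N.W (i + 1) q p * u p) + N.b (i + 1) q)

/-- The suffix function `S_i^N : ℝ^{n_i} → ℝ` (meaningful for `1 ≤ i ≤ L - 1`):
`S_{L-1}(u) = W_L u + b_L` and `S_i(u) = S_{i+1}(σ(W_{i+1} u + b_{i+1}))`. -/
def suffix (N : Net) (i : ℕ) (u : ℕ → ℝ) : ℝ := N.suffixAux (N.L - 1 - i) i u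

end Net

/-- `f` is monotone nondecreasing in coordinate `j`. -/
def MonoIncAt (f : (ℕ → ℝ) → ℝ) (j : ℕ) : Prop :=
  ∀ (u : ℕ → ℝ) (a a' : ℝ), a ≤ a' → f (Function.update u j a) ≤ f (Function.update u j a')

/-- `f` is monotone nonincreasing in coordinate `j`. -/
def MonoDecAt (f : (ℕ → ℝ) → ℝ) (j : ℕ) : Prop :=
  ∀ (u : ℕ → ℝ) (a a' : ℝ), a ≤ a' → f (Function.update u j a') ≤ f (Function.update u j a)

/-- Hidden neuron `(i, j)` is `inc`: the suffix function `S_i` is monotone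
nondecreasing in coordinate `j`. -/
def Net.Inc (N : Net) (i j : ℕ) : Prop := MonoIncAt (N.suffix i) j

/-- Hidden neuron `(i, j)` is `dec`: the suffix function `S_i` is monotone
nonincreasing in coordinate `j`. -/
def Net.Dec (N : Net) (i j : ℕ) : Prop := MonoDecAt (N.suffix i) j

/-- The "doubled" network: every hidden neuron is split in an even copy and an
odd copy, both computing the same activation; weights are split by sign
according to parity. -/
def dbl (N : Net) : Net where
  L := N.L
  n := fun i => if i = 0 ∨ N.L ≤ i then N.n i else 2 * N.n i
  W := fun i q p =>
    if i = N.L then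
      if N.L = 1 then N.W i q p
      else if p % 2 = 0 then max (N.W N.L 0 (p / 2)) 0 else min (N.W N.L 0 (p / 2)) 0
    else if i = 1 then N.W 1 (q / 2) p
    else if q % 2 = p % 2 then max (N.W i (q / 2) (p / 2)) 0
         else min (N.W i (q / 2) (p / 2)) 0
  b := fun i q => if i = N.L then N.b i q else N.b i (q / 2)

lemma sum_pair (m : ℕ) (f : ℕ → ℝ) :
    ∑ p ∈ Finset.range (2 * m), f p
      = ∑ p ∈ Finset.range m, (f (2 * p) + f (2 * p + 1)) := by
  induction m with
  | zero => simp
  | succ m ih =>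
    have h : 2 * (m + 1) = (2 * m + 1) + 1 := by ring
    rw [h, Finset.sum_range_succ, Finset.sum_range_succ, Finset.sum_range_succ, ih]
    ring

lemma dbl_act (N : Net) (x : ℕ → ℝ) :
    ∀ i, 1 ≤ i → i < N.L → ∀ q, (dbl N).act x i q = N.act x i (q / 2) := by
  intro i
  induction i with
  | zero => omega
  | succ i ih =>
    intro _ hlt q
    have hne : i + 1 ≠ N.L := by omega
    by_cases hi : i = 0
    · subst hi
      have hn : (dbl N).n 0 = N.n 0 := by simp [dbl]
      simp only [Net.act, hn]
      have hb : (dbl N).b 1 q = N.b 1 (q / 2) := by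
        simp only [dbl]; rw [if_neg (by omega)]
      have hW : ∀ p, (dbl N).W 1 q p = N.W 1 (q / 2) p := by
        intro p; simp only [dbl, if_true]; rw [if_neg (by omega)]
      simp [hb, hW, Net.act]
    · have hi1 : 1 ≤ i := by omega
      have hn : (dbl N).n i = 2 * N.n i := by
        simp only [dbl]; rw [if_neg (by omega)]
      have hb : (dbl N).b (i + 1) q = N.b (i + 1) (q / 2) := by
        simp only [dbl]; rw [if_neg hne]
      simp only [Net.act, hn, hb]
      congr 2
      rw [sum_pair]
      apply Finset.sum_congr rfl
      intro p _
      have ha0 : (dbl N).act x i (2 * p) = N.act x i p := by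
        rw [ih hi1 (by omega)]
        congr 1; omega
      have ha1 : (dbl N).act x i (2 * p + 1) = N.act x i p := by
        rw [ih hi1 (by omega)]
        congr 1; omega
      have hW : ∀ r, (dbl N).W (i + 1) q r =
          if q % 2 = r % 2 then max (N.W (i + 1) (q / 2) (r / 2)) 0
          else min (N.W (i + 1) (q / 2) (r / 2)) 0 := by
        intro r; simp only [dbl]; rw [if_neg hne, if_neg (by omega)]
      rw [ha0, ha1, hW, hW]
      have e0 : (2 * p) / 2 = p := by omega
      have e1 : (2 * p + 1) / 2 = p := by omega
      have m0 : (2 * p) % 2 = 0 := by omega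
      have m1 : (2 * p + 1) % 2 = 1 := by omega
      rw [e0, e1, m0, m1]
      rcases Nat.mod_two_eq_zero_or_one q with hq | hq <;> rw [hq]
      · rw [if_pos rfl, if_neg (by omega)]
        have h := max_add_min (N.W (i + 1) (q / 2) p) 0
        linear_combination (N.act x i p) * h
      · rw [if_neg (by omega), if_pos rfl]
        have h := max_add_min (N.W (i + 1) (q / 2) p) 0
        linear_combination (N.act x i p) * h

lemma dbl_mono (N : Net) :
    ∀ d i, 1 ≤ i → i + d + 1 = N.L → ∀ u u' : ℕ → ℝ,
      (∀ p, (p % 2 = 0 → u p ≤ u' p) ∧ (p % 2 = 1 → u' p ≤ u p)) →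
      (dbl N).suffixAux d i u ≤ (dbl N).suffixAux d i u' := by
  intro d
  induction d with
  | zero =>
    intro i hi hL u u' h
    simp only [Net.suffixAux]
    apply add_le_add_left
    apply Finset.sum_le_sum
    intro p _
    have hW : (dbl N).W (i + 1) 0 p =
        if p % 2 = 0 then max (N.W N.L 0 (p / 2)) 0 else min (N.W N.L 0 (p / 2)) 0 := by
      simp only [dbl]; rw [if_pos (by omega), if_neg (by omega)]
    rw [hW]
    rcases Nat.mod_two_eq_zero_or_one p with hp | hp <;> rw [hp]
    · rw [if_pos rfl]
      exact mul_le_mul_of_nonneg_left ((h p).1 hp) (le_max_right _ 0)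
    · rw [if_neg (by omega)]
      exact mul_le_mul_of_nonpos_left ((h p).2 hp) (min_le_right _ 0)
  | succ d ih =>
    intro i hi hL u u' h
    simp only [Net.suffixAux]
    apply ih (i + 1) (by omega) (by omega)
    intro q
    have hW : ∀ p, (dbl N).W (i + 1) q p =
        if q % 2 = p % 2 then max (N.W (i + 1) (q / 2) (p / 2)) 0
        else min (N.W (i + 1) (q / 2) (p / 2)) 0 := by
      intro p; simp only [dbl]; rw [if_neg (by omega), if_neg (by omega)]
    constructor
    · intro hq
      apply max_le_max ?_ le_rfl
      apply add_le_add_left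
      apply Finset.sum_le_sum
      intro p _
      rw [hW]
      rcases Nat.mod_two_eq_zero_or_one p with hp | hp
      · rw [hq, hp, if_pos rfl]
        exact mul_le_mul_of_nonneg_left ((h p).1 hp) (le_max_right _ 0)
      · rw [hq, hp, if_neg (by omega)]
        exact mul_le_mul_of_nonpos_left ((h p).2 hp) (min_le_right _ 0)
    · intro hq
      apply max_le_max ?_ le_rfl
      apply add_le_add_left
      apply Finset.sum_le_sum
      intro p _
      rw [hW]
      rcases Nat.mod_two_eq_zero_or_one p with hp | hp
      · rw [hq, hp, if_neg (by omega)]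
        exact mul_le_mul_of_nonpos_left ((h p).1 hp) (min_le_right _ 0)
      · rw [hq, hp, if_pos rfl]
        exact mul_le_mul_of_nonneg_left ((h p).2 hp) (le_max_right _ 0)

/-- preprocessing / classification, Lemma 1.
For every fully connected ReLU network `N` with a single output neuron there
is a network `N'` with the same number of layers computing the same function,
whose hidden layers are at most twice as large, and in which every hidden
neuron is classified `inc` or `dec`. -/
theorem statement_0 (N : Net) (hL : 1 ≤ N.L) (hout : N.n N.L = 1) :
    ∃ N' : Net,
      N'.L = N.L ∧
      N'.n 0 = N.n 0 ∧
      N'.n N'.L = N.n N.L ∧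
      (∀ i, 1 ≤ i → i < N.L → N'.n i ≤ 2 * N.n i) ∧
      (∀ x : ℕ → ℝ, N'.out x = N.out x) ∧
      (∀ i j, 1 ≤ i → i < N.L → j < N'.n i → N'.Inc i j ∨ N'.Dec i j) := by
  refine ⟨dbl N, rfl, by simp [dbl], by simp [dbl], ?_, ?_, ?_⟩
  · intro i h1 h2
    simp only [dbl]
    rw [if_neg (by omega)]
  · intro x
    by_cases hL1 : N.L = 1
    · simp only [Net.out, dbl, hL1]
      norm_num [Net.act]
    · have hL2 : 2 ≤ N.L := by omega
      have hLL : (dbl N).L = N.L := rfl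
      simp only [Net.out, hLL]
      have hb : (dbl N).b N.L 0 = N.b N.L 0 := by simp [dbl]
      have hn : (dbl N).n (N.L - 1) = 2 * N.n (N.L - 1) := by
        simp only [dbl]; rw [if_neg (by omega)]
      rw [hb, hn, sum_pair]
      congr 1
      apply Finset.sum_congr rfl
      intro p _
      have ha0 : (dbl N).act x (N.L - 1) (2 * p) = N.act x (N.L - 1) p := by
        rw [dbl_act N x (N.L - 1) (by omega) (by omega)]
        congr 1; omega
      have ha1 : (dbl N).act x (N.L - 1) (2 * p + 1) = N.act x (N.L - 1) p := by
        rw [dbl_act N x (N.L - 1) (by omega) (by omega)]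
        congr 1; omega
      have hW : ∀ r, (dbl N).W N.L 0 r =
          if r % 2 = 0 then max (N.W N.L 0 (r / 2)) 0 else min (N.W N.L 0 (r / 2)) 0 := by
        intro r; simp only [dbl, if_true]; rw [if_neg hL1]
      rw [ha0, ha1, hW, hW]
      have e0 : (2 * p) / 2 = p := by omega
      have e1 : (2 * p + 1) / 2 = p := by omega
      rw [if_pos (by omega), if_neg (by omega), e0, e1]
      have h := max_add_min (N.W N.L 0 p) 0
      linear_combination (N.act x (N.L - 1) p) * h
  · intro i j h1 h2 hj
    have hkey : ∀ u u' : ℕ → ℝ,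
        (∀ p, (p % 2 = 0 → u p ≤ u' p) ∧ (p % 2 = 1 → u' p ≤ u p)) →
        (dbl N).suffix i u ≤ (dbl N).suffix i u' := by
      intro u u' h
      have hLL : (dbl N).L = N.L := rfl
      unfold Net.suffix
      rw [hLL]
      exact dbl_mono N (N.L - 1 - i) i h1 (by omega) u u' h
    rcases Nat.mod_two_eq_zero_or_one j with hjp | hjp
    · left
      intro u a a' haa
      apply hkey
      intro p
      by_cases hp : p = j
      · subst hp
        constructor <;> intro hpp <;> simp_all [Function.update]
      · simp [Function.update, hp]
    · right
      intro u a a' haa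
      apply hkey
      intro p
      by_cases hp : p = j
      · subst hp
        constructor <;> intro hpp <;> simp_all [Function.update]
      · simp [Function.update, hp]
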